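/- arXiv:2108.04580 — 3 statements merged into one kernel-verified Lean document; each statement's English description precedes it below -/
import Mathlib

section
/- (Gauge function for the symmetric gauge) Let a ∈ [−1,1) with a ≠ 0, α ∈ (0,π), γ ∈ [0,π/2]. Define φ on the closed half-plane {x₂ ≥ 0} by φ(x₁,x₂) = ((1/2)x₁x₂ + ((a−1)/2)(cos α/sin α)x₂²)·cos γ on the sector where x₁ sin α − x₂ cos α > 0, and φ(x₁,x₂) = (a/2)x₁x₂·cos γ on the sector where x₁ sin α − x₂ cos α < 0. Then φ extends continuously across the ray {x₁ sin α − x₂ cos α = 0, x₂ ≥ 0} (both formulas agree there), and on each open sector φ is smooth with ∇φ = A̲_{α,γ,a} − Ă_{α,γ,a}, where Ă_{α,γ,a}(x) = (cos γ/2)·s̲(x)·(−x₂, x₁) is the symmetric-gauge potential (with s̲ = 1 on the first sector and a on the second); in particular A̲_{α,γ,a} and Ă_{α,γ,a} are gauge-equivalent on the half-plane. -/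
open MeasureTheory Real Set Filter

noncomputable section

namespace MagStep

/-- `j`-th coordinate basis vector of `ℝ³`. -/
def e3 (j : Fin 3) : Fin 3 → ℝ := Pi.single j 1

/-- `j`-th coordinate basis vector of `ℝ²`. -/
def e2 (j : Fin 2) : Fin 2 → ℝ := Pi.single j 1

/-- The open half-space `{x₂ > 0}` of `ℝ³` (coordinates indexed `0,1,2` for `x₁,x₂,x₃`). -/
def H3 : Set (Fin 3 → ℝ) := {x | 0 < x 1}

/-- The open half-plane `{x₂ > 0}` of `ℝ²`. -/
def H2 : Set (Fin 2 → ℝ) := {x | 0 < x 1}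

/-- `w(x) = x₁ sin α - x₂ cos α` on `ℝ³`. -/
def w3 (α : ℝ) (x : Fin 3 → ℝ) : ℝ := x 0 * Real.sin α - x 1 * Real.cos α

/-- `w(x) = x₁ sin α - x₂ cos α` on `ℝ²`. -/
def w2 (α : ℝ) (x : Fin 2 → ℝ) : ℝ := x 0 * Real.sin α - x 1 * Real.cos α

/-- The step function: `1` where `w > 0`, `a` where `w < 0`. -/
def step2 (α a : ℝ) (x : Fin 2 → ℝ) : ℝ := if 0 < w2 α x then 1 else a

/-- Bottom of the spectrum (infimum of the Rayleigh quotient over nonzero smooth compactly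
supported functions) of the magnetic operator `-(∇ - iA)²` on `S ⊆ ℝ³`. -/
def groundEnergy3 (A : (Fin 3 → ℝ) → Fin 3 → ℝ) (S : Set (Fin 3 → ℝ)) : ℝ :=
  sInf { r : ℝ | ∃ u : (Fin 3 → ℝ) → ℂ, ContDiff ℝ (⊤ : ℕ∞) u ∧ HasCompactSupport u ∧
    (0 < ∫ x in S, ‖u x‖ ^ 2) ∧
    r = (∫ x in S, ∑ j : Fin 3,
          ‖fderiv ℝ u x (e3 j) - Complex.I * (A x j : ℂ) * u x‖ ^ 2) /
        ∫ x in S, ‖u x‖ ^ 2 }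

/-- Bottom of the spectrum of `-(∇ - iA)² + V` on `S ⊆ ℝ²`. -/
def groundEnergy2 (A : (Fin 2 → ℝ) → Fin 2 → ℝ) (V : (Fin 2 → ℝ) → ℝ)
    (S : Set (Fin 2 → ℝ)) : ℝ :=
  sInf { r : ℝ | ∃ u : (Fin 2 → ℝ) → ℂ, ContDiff ℝ (⊤ : ℕ∞) u ∧ HasCompactSupport u ∧
    (0 < ∫ x in S, ‖u x‖ ^ 2) ∧
    r = (∫ x in S, ((∑ j : Fin 2,
          ‖fderiv ℝ u x (e2 j) - Complex.I * (A x j : ℂ) * u x‖ ^ 2)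
          + V x * ‖u x‖ ^ 2)) /
        ∫ x in S, ‖u x‖ ^ 2 }

/-- The discontinuous vector potential `A_{α,γ,a}` on the half-space. -/
def Apot3 (α γ a : ℝ) (x : Fin 3 → ℝ) : Fin 3 → ℝ :=
  ![0,
    if 0 < w3 α x then
      x 0 * Real.cos γ - (1 - a) * (Real.cos α / Real.sin α) * x 1 * Real.cos γ
    else a * (x 0 * Real.cos γ),
    if 0 < w3 α x then (x 1 * Real.cos α - x 0 * Real.sin α) * Real.sin γ
    else a * ((x 1 * Real.cos α - x 0 * Real.sin α) * Real.sin γ)]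

/-- `λ_{α,γ,a}`: bottom of the spectrum of the magnetic Neumann Laplacian on the half-space
with the discontinuous field. -/
def lambda3D (α γ a : ℝ) : ℝ := groundEnergy3 (Apot3 α γ a) H3

/-- `A_ν(x) = (0, x₁ cos ν, -x₁ sin ν)`, with `curl A_ν = (0, sin ν, cos ν)`. -/
def Anu (ν : ℝ) (x : Fin 3 → ℝ) : Fin 3 → ℝ := ![0, x 0 * Real.cos ν, -(x 0 * Real.sin ν)]

/-- `ζ_ν`: bottom of the spectrum of the Neumann realization on the half-space with a constant
unit field making angle `ν` with the boundary. -/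
def zeta (ν : ℝ) : ℝ := groundEnergy3 (Anu ν) H3

/-- `μ_a(ξ)`: bottom of the spectrum of the 1D fiber operator with step `σ_a`. -/
def mu (a ξ : ℝ) : ℝ :=
  sInf { r : ℝ | ∃ u : ℝ → ℂ, ContDiff ℝ (⊤ : ℕ∞) u ∧ HasCompactSupport u ∧
    (0 < ∫ t : ℝ, ‖u t‖ ^ 2) ∧
    r = (∫ t : ℝ, (‖deriv u t‖ ^ 2 +
          ((if 0 < t then 1 else a) * t - ξ) ^ 2 * ‖u t‖ ^ 2)) /
        ∫ t : ℝ, ‖u t‖ ^ 2 }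

/-- `β_a = inf_ξ μ_a(ξ)`. -/
def beta (a : ℝ) : ℝ := ⨅ ξ : ℝ, mu a ξ

/-- The projected vector potential `A̲_{α,γ,a}` on the half-plane. -/
def Aund (α γ a : ℝ) (x : Fin 2 → ℝ) : Fin 2 → ℝ :=
  ![0,
    if 0 < w2 α x then
      x 0 * Real.cos γ - (1 - a) * (Real.cos α / Real.sin α) * x 1 * Real.cos γ
    else a * (x 0 * Real.cos γ)]

/-- The electric potential `V_{α,γ,a,τ}(x) = (s̲(x) w(x) sin γ - τ)²`. -/
def Vpot (α γ a τ : ℝ) (x : Fin 2 → ℝ) : ℝ :=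
  (step2 α a x * w2 α x * Real.sin γ - τ) ^ 2

/-- `σ(α,γ,a,τ)`: bottom of the spectrum of the reduced 2D fiber operator. -/
def sigma2D (α γ a τ : ℝ) : ℝ := groundEnergy2 (Aund α γ a) (Vpot α γ a τ) H2

/-- `Σ(α,γ,a,τ,R)`: Rayleigh quotient infimum over nonzero smooth compactly supported
functions vanishing on the closed ball of radius `R` centered at the origin. -/
def SigmaR (α γ a τ R : ℝ) : ℝ :=
  sInf { r : ℝ | ∃ u : (Fin 2 → ℝ) → ℂ, ContDiff ℝ (⊤ : ℕ∞) u ∧ HasCompactSupport u ∧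
    (∀ x ∈ Metric.closedBall (0 : Fin 2 → ℝ) R, u x = 0) ∧
    (0 < ∫ x in H2, ‖u x‖ ^ 2) ∧
    r = (∫ x in H2, ((∑ j : Fin 2,
          ‖fderiv ℝ u x (e2 j) - Complex.I * (Aund α γ a x j : ℂ) * u x‖ ^ 2)
          + Vpot α γ a τ x * ‖u x‖ ^ 2)) /
        ∫ x in H2, ‖u x‖ ^ 2 }

/-- `σ_ess(α,γ,a,τ)`: the Persson (essential spectrum) threshold. -/
def sigmaEss (α γ a τ : ℝ) : ℝ := sSup ((fun R => SigmaR α γ a τ R) '' Ioi (0 : ℝ))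

/-- The explicit constant `A[α,γ,a]`. -/
def Aconst (α γ a : ℝ) : ℝ :=
  (1 / 128) * (-1 + Real.cosh π / Real.sinh π) *
    (π * Real.cos γ ^ 2 *
        (4 * (a - 1) * ((a - Real.exp π) * Real.exp (π - α) + (a * Real.exp π - 1) * Real.exp α)
          - (a - 1) ^ 2 * (Real.exp (2 * π - 2 * α) + Real.exp (2 * α))
          - 2 * Real.exp π * (-4 * a + (3 - 2 * a + 3 * a ^ 2) * Real.cosh π))
      + 4 * (Real.exp (2 * π) - 1) *
          (-(a ^ 2 * (π - α) + α) * (-3 + Real.cos (2 * γ))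
            + 2 * (a ^ 2 - 1) * Real.sin γ ^ 2 * Real.sin (2 * α)))

/-- The gauge function `φ`. -/
def phi (α γ a : ℝ) (x : Fin 2 → ℝ) : ℝ :=
  if 0 < w2 α x then
    ((1 / 2) * x 0 * x 1 + ((a - 1) / 2) * (Real.cos α / Real.sin α) * x 1 ^ 2) * Real.cos γ
  else (a / 2) * x 0 * x 1 * Real.cos γ

/-- The symmetric-gauge potential `Ă_{α,γ,a}(x) = (cos γ / 2) s̲(x) (-x₂, x₁)`. -/
def Abreve (α γ a : ℝ) (x : Fin 2 → ℝ) : Fin 2 → ℝ :=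
  ![-(Real.cos γ / 2 * step2 α a x * x 1), Real.cos γ / 2 * step2 α a x * x 0]

lemma hasDerivAt_quad (p b c t0 : ℝ) :
    HasDerivAt (fun t : ℝ => p * t ^ 2 + b * t + c) (2 * p * t0 + b) t0 := by
  have h := (((hasDerivAt_pow 2 t0).const_mul p).add ((hasDerivAt_id t0).const_mul b)).add_const c
  exact h.congr_deriv (by push_cast; ring)

/-- **Gauge function for the symmetric gauge.** The two formulas for `φ` agree on the
discontinuity ray, `φ` is smooth on each open sector, and there `∇φ = A̲ - Ă`. -/
theorem gauge_function (a α γ : ℝ) (ha : a ∈ Ico (-1 : ℝ) 1) (ha0 : a ≠ 0)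
    (hα : α ∈ Ioo 0 π) (hγ : γ ∈ Icc 0 (π / 2)) :
    (∀ x : Fin 2 → ℝ, 0 ≤ x 1 → w2 α x = 0 →
      ((1 / 2) * x 0 * x 1 + ((a - 1) / 2) * (Real.cos α / Real.sin α) * x 1 ^ 2) * Real.cos γ
        = (a / 2) * x 0 * x 1 * Real.cos γ) ∧
    ContDiffOn ℝ (⊤ : ℕ∞) (phi α γ a) {x : Fin 2 → ℝ | 0 < x 1 ∧ 0 < w2 α x} ∧
    ContDiffOn ℝ (⊤ : ℕ∞) (phi α γ a) {x : Fin 2 → ℝ | 0 < x 1 ∧ w2 α x < 0} ∧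
    (∀ x : Fin 2 → ℝ, 0 < x 1 → w2 α x ≠ 0 → ∀ j : Fin 2,
      HasDerivAt (fun t => phi α γ a (Function.update x j t))
        (Aund α γ a x j - Abreve α γ a x j) (x j)) := by
  have hs : Real.sin α ≠ 0 := (Real.sin_pos_of_pos_of_lt_pi hα.1 hα.2).ne'
  refine ⟨?_, ?_, ?_, ?_⟩
  · intro x _ hw
    have hw' : x 0 * Real.sin α - x 1 * Real.cos α = 0 := hw
    have hx0 : x 0 = x 1 * Real.cos α / Real.sin α := by
      field_simp
      linarith
    rw [hx0]
    field_simp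
    try ring
    try tauto
  · have hsm : ContDiff ℝ (⊤ : ℕ∞) (fun x : Fin 2 → ℝ =>
        ((1 / 2) * x 0 * x 1 + ((a - 1) / 2) * (Real.cos α / Real.sin α) * x 1 ^ 2) *
          Real.cos γ) := by fun_prop
    exact hsm.contDiffOn.congr fun x hx => by simp only [phi]; rw [if_pos hx.2]
  · have hsm : ContDiff ℝ (⊤ : ℕ∞) (fun x : Fin 2 → ℝ =>
        (a / 2) * x 0 * x 1 * Real.cos γ) := by fun_prop
    exact hsm.contDiffOn.congr fun x hx => by simp only [phi]; rw [if_neg (not_lt.mpr hx.2.le)]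
  · intro x _ hw j
    have h10 : (1 : Fin 2) ≠ 0 := by decide
    have h01 : (0 : Fin 2) ≠ 1 := by decide
    have hcont : ∀ j : Fin 2, Continuous fun t : ℝ => w2 α (Function.update x j t) := by
      intro j
      have : Continuous fun t : ℝ => Function.update x j t :=
        continuous_const.update j continuous_id
      exact (by unfold w2; fun_prop : Continuous (w2 α)).comp this
    rcases hw.lt_or_gt with hw' | hw'
    · -- w < 0 sector
      have hev : ∀ j : Fin 2, ∀ᶠ t in nhds (x j), w2 α (Function.update x j t) < 0 := by
        intro j
        have h := (hcont j).continuousAt (x := x j)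
        rw [ContinuousAt, Function.update_eq_self] at h
        exact h.eventually (eventually_lt_nhds hw')
      fin_cases j
      · have heq : (fun t => phi α γ a (Function.update x 0 t)) =ᶠ[nhds (x 0)]
            fun t => 0 * t ^ 2 + (a / 2 * x 1 * Real.cos γ) * t + 0 :=
          (hev 0).mono fun t ht => by
            simp only [phi]
            rw [if_neg (not_lt.mpr ht.le), Function.update_self, Function.update_of_ne h10]
            ring
        have key := (hasDerivAt_quad _ _ _ (x 0)).congr_of_eventuallyEq heq
        refine key.congr_deriv ?_
        simp [Aund, Abreve, step2, if_neg (not_lt.mpr hw'.le)]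
        ring
      · have heq : (fun t => phi α γ a (Function.update x 1 t)) =ᶠ[nhds (x 1)]
            fun t => 0 * t ^ 2 + (a / 2 * x 0 * Real.cos γ) * t + 0 :=
          (hev 1).mono fun t ht => by
            simp only [phi]
            rw [if_neg (not_lt.mpr ht.le), Function.update_self, Function.update_of_ne h01]
            ring
        have key := (hasDerivAt_quad _ _ _ (x 1)).congr_of_eventuallyEq heq
        refine key.congr_deriv ?_
        simp [Aund, Abreve, step2, if_neg (not_lt.mpr hw'.le)]
        ring
    · -- w > 0 sector
      have hev : ∀ j : Fin 2, ∀ᶠ t in nhds (x j), 0 < w2 α (Function.update x j t) := by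
        intro j
        have h := (hcont j).continuousAt (x := x j)
        rw [ContinuousAt, Function.update_eq_self] at h
        exact h.eventually (eventually_gt_nhds hw')
      fin_cases j
      · have heq : (fun t => phi α γ a (Function.update x 0 t)) =ᶠ[nhds (x 0)]
            fun t => 0 * t ^ 2 + (1 / 2 * x 1 * Real.cos γ) * t +
              (a - 1) / 2 * (Real.cos α / Real.sin α) * x 1 ^ 2 * Real.cos γ :=
          (hev 0).mono fun t ht => by
            simp only [phi]
            rw [if_pos ht, Function.update_self, Function.update_of_ne h10]
            ring
        have key := (hasDerivAt_quad _ _ _ (x 0)).congr_of_eventuallyEq heq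
        refine key.congr_deriv ?_
        simp [Aund, Abreve, step2, if_pos hw']
        ring
      · have heq : (fun t => phi α γ a (Function.update x 1 t)) =ᶠ[nhds (x 1)]
            fun t => ((a - 1) / 2 * (Real.cos α / Real.sin α) * Real.cos γ) * t ^ 2 +
              (1 / 2 * x 0 * Real.cos γ) * t + 0 :=
          (hev 1).mono fun t ht => by
            simp only [phi]
            rw [if_pos ht, Function.update_self, Function.update_of_ne h01]
            ring
        have key := (hasDerivAt_quad _ _ _ (x 1)).congr_of_eventuallyEq heq
        refine key.congr_deriv ?_
        simp [Aund, Abreve, step2, if_pos hw']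
        ring

end MagStep
end
end

section
/- (Quadratic minimization yielding the polynomial P) Let ω > 0, α ∈ (0,π), γ ∈ [0,π/2], a ∈ [−1,1) with a ≠ 0, and Λ ∈ ℝ. For (c₁,c₂,c₃) ∈ ℝ³ let g(θ) = c₁e^{θ} + c₂e^{−θ} for θ ∈ (−π+α, 0] and g(θ) = c₃e^{θ} + (c₁+c₂−c₃)e^{−θ} for θ ∈ (0, α), let s̃(θ) = a on (−π+α,0) and 1 on (0,α), and define J(c₁,c₂,c₃) := (1/(2ω)) ∫_{−π+α}^{α} (g² + g′² − Λ) dθ − (√π cos γ/(4 ω^{3/2})) ∫_{−π+α}^{α} s̃ g′ dθ + (1/(2ω²)) ∫_{−π+α}^{α} ( ω² + s̃² sin²γ sin²θ + (1/4) s̃² cos²γ ) dθ. Then J attains its infimum over ℝ³ at a unique point, and this infimum equals A[α,γ,a]·(1/ω)² − (π/2)·Λ·(1/ω) + π/2. -/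
open MeasureTheory Real Set Filter

noncomputable section

namespace MagStep

/-- The piecewise-exponential angular function `g`. -/
def gpw (c : ℝ × ℝ × ℝ) (θ : ℝ) : ℝ :=
  if θ ≤ 0 then c.1 * Real.exp θ + c.2.1 * Real.exp (-θ)
  else c.2.2 * Real.exp θ + (c.1 + c.2.1 - c.2.2) * Real.exp (-θ)

/-- Its piecewise derivative `g'`. -/
def gpwd (c : ℝ × ℝ × ℝ) (θ : ℝ) : ℝ :=
  if θ ≤ 0 then c.1 * Real.exp θ - c.2.1 * Real.exp (-θ)
  else c.2.2 * Real.exp θ - (c.1 + c.2.1 - c.2.2) * Real.exp (-θ)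

/-- The angular step function `s̃`: `a` for `θ < 0` and `1` for `θ > 0`. -/
def stg (a θ : ℝ) : ℝ := if θ < 0 then a else 1

/-- The trial energy `J(c₁,c₂,c₃)`. -/
def Jfun (ω α γ a Λ : ℝ) (c : ℝ × ℝ × ℝ) : ℝ :=
  (1 / (2 * ω)) * (∫ θ in Ioo (-π + α) α, (gpw c θ ^ 2 + gpwd c θ ^ 2 - Λ))
    - (Real.sqrt π * Real.cos γ / (4 * ω ^ ((3 : ℝ) / 2))) *
        (∫ θ in Ioo (-π + α) α, stg a θ * gpwd c θ)
    + (1 / (2 * ω ^ 2)) *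
        (∫ θ in Ioo (-π + α) α,
          (ω ^ 2 + stg a θ ^ 2 * Real.sin γ ^ 2 * Real.sin θ ^ 2
            + (1 / 4) * stg a θ ^ 2 * Real.cos γ ^ 2))


/-! ### Auxiliary machinery for `J_attains_min` -/

section Aux

lemma pieceInt (p q : ℝ) (hp : p ≤ 0) (hq : 0 < q) (f f₁ f₂ : ℝ → ℝ) (F₁ F₂ : ℝ → ℝ)
    (h₁ : ∀ θ ∈ Ioo p 0, f θ = f₁ θ) (h₂ : ∀ θ ∈ Ioo 0 q, f θ = f₂ θ)
    (hc₁ : Continuous f₁) (hc₂ : Continuous f₂)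
    (hd₁ : ∀ θ, HasDerivAt F₁ (f₁ θ) θ) (hd₂ : ∀ θ, HasDerivAt F₂ (f₂ θ) θ) :
    ∫ θ in Ioo p q, f θ = (F₁ 0 - F₁ p) + (F₂ q - F₂ 0) := by
  rcases eq_or_lt_of_le hp with hp0 | hp0
  · subst hp0
    have h0 : (F₁ 0 - F₁ 0) = 0 := by ring
    rw [h0, zero_add, setIntegral_congr_fun measurableSet_Ioo h₂,
      ← integral_Ioc_eq_integral_Ioo, ← intervalIntegral.integral_of_le hq.le]
    exact intervalIntegral.integral_eq_sub_of_hasDerivAt (fun x _ => hd₂ x)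
      (hc₂.intervalIntegrable _ _)
  · have hsplit : Ioo p q = Ioc p 0 ∪ Ioo 0 q := (Set.Ioc_union_Ioo_eq_Ioo hp hq).symm
    have hint1 : IntegrableOn f (Ioc p 0) := by
      rw [integrableOn_Ioc_iff_integrableOn_Ioo]
      exact (((hc₁.integrableOn_Ioc (a := p) (b := 0)).mono_set Ioo_subset_Ioc_self).congr_fun
        (fun x hx => (h₁ x hx).symm) measurableSet_Ioo)
    have hint2 : IntegrableOn f (Ioo 0 q) :=
      (((hc₂.integrableOn_Ioc (a := 0) (b := q)).mono_set Ioo_subset_Ioc_self).congr_fun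
        (fun x hx => (h₂ x hx).symm) measurableSet_Ioo)
    have hdisj : Disjoint (Ioc p 0) (Ioo 0 q) := by
      rw [Set.disjoint_left]; rintro x ⟨_, hx0⟩ ⟨hx0', _⟩; linarith
    rw [hsplit, setIntegral_union hdisj measurableSet_Ioo hint1 hint2,
      integral_Ioc_eq_integral_Ioo, setIntegral_congr_fun measurableSet_Ioo h₁,
      setIntegral_congr_fun measurableSet_Ioo h₂,
      ← integral_Ioc_eq_integral_Ioo, ← integral_Ioc_eq_integral_Ioo,
      ← intervalIntegral.integral_of_le hp, ← intervalIntegral.integral_of_le hq.le,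
      intervalIntegral.integral_eq_sub_of_hasDerivAt (fun x _ => hd₁ x)
        (hc₁.intervalIntegrable _ _),
      intervalIntegral.integral_eq_sub_of_hasDerivAt (fun x _ => hd₂ x)
        (hc₂.intervalIntegrable _ _)]

def ell1 (X Y a : ℝ) : ℝ := a * (1 - X / Y) + 1 / X - 1
def ell2 (X Y a : ℝ) : ℝ := a * (1 - Y / X) + 1 / X - 1
def ell3 (X : ℝ) : ℝ := X - 1 / X

def qQ (X Y : ℝ) (c : ℝ × ℝ × ℝ) : ℝ :=
  (1 - X ^ 2 / Y ^ 2) * c.1 ^ 2 + (Y ^ 2 / X ^ 2 - 1) * c.2.1 ^ 2 + (X ^ 2 - 1) * c.2.2 ^ 2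
    + (1 - 1 / X ^ 2) * (c.1 + c.2.1 - c.2.2) ^ 2

def qL (X Y a : ℝ) (c : ℝ × ℝ × ℝ) : ℝ :=
  ell1 X Y a * c.1 + ell2 X Y a * c.2.1 + ell3 X * c.2.2

def Sval (α γ a : ℝ) : ℝ :=
  Real.sin γ ^ 2 * (a ^ 2 * ((π - α) / 2 + Real.sin α * Real.cos α / 2)
      + α / 2 - Real.sin α * Real.cos α / 2)
    + (1 / 4) * Real.cos γ ^ 2 * (a ^ 2 * (π - α) + α)

def wst (X Y a : ℝ) : ℝ :=
  ((ell1 X Y a * Y ^ 2 + ell2 X Y a * X ^ 2) * (X ^ 2 - 1) - ell3 X * (Y ^ 2 - X ^ 2))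
    / (4 * (Y ^ 2 - 1) * (X ^ 2 - 1))

def dd (X Y a : ℝ) : ℝ × ℝ × ℝ :=
  (Y ^ 2 * (X ^ 2 * ell1 X Y a - 2 * (X ^ 2 - 1) * wst X Y a)
      / (2 * X ^ 2 * (Y ^ 2 - X ^ 2)),
   (X ^ 2 * ell2 X Y a - 2 * (X ^ 2 - 1) * wst X Y a) / (2 * (Y ^ 2 - X ^ 2)),
   (X ^ 2 * ell3 X + 2 * (X ^ 2 - 1) * wst X Y a) / (2 * X ^ 2 * (X ^ 2 - 1)))

lemma hasDerivAt_expneg (θ : ℝ) : HasDerivAt (fun t => Real.exp (-t)) (-Real.exp (-θ)) θ := by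
  simpa using (hasDerivAt_neg θ).exp

lemma int1 (α Λ : ℝ) (hα : α ∈ Ioo 0 π) (c : ℝ × ℝ × ℝ) :
    ∫ θ in Ioo (-π + α) α, (gpw c θ ^ 2 + gpwd c θ ^ 2 - Λ)
      = qQ (Real.exp α) (Real.exp π) c - Λ * π := by
  have hp : -π + α ≤ 0 := by linarith [hα.2]
  rw [pieceInt (-π + α) α hp hα.1 _
      (fun θ => (c.1 * Real.exp θ + c.2.1 * Real.exp (-θ)) ^ 2
        + (c.1 * Real.exp θ - c.2.1 * Real.exp (-θ)) ^ 2 - Λ)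
      (fun θ => (c.2.2 * Real.exp θ + (c.1 + c.2.1 - c.2.2) * Real.exp (-θ)) ^ 2
        + (c.2.2 * Real.exp θ - (c.1 + c.2.1 - c.2.2) * Real.exp (-θ)) ^ 2 - Λ)
      (fun θ => c.1 ^ 2 * Real.exp θ ^ 2 - c.2.1 ^ 2 * Real.exp (-θ) ^ 2 - Λ * θ)
      (fun θ => c.2.2 ^ 2 * Real.exp θ ^ 2 - (c.1 + c.2.1 - c.2.2) ^ 2 * Real.exp (-θ) ^ 2 - Λ * θ)
      (fun θ hθ => by simp only [gpw, gpwd, if_pos hθ.2.le])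
      (fun θ hθ => by simp only [gpw, gpwd, if_neg (not_le.2 hθ.1)])
      (by fun_prop) (by fun_prop)
      (fun θ => by
        have h := ((((Real.hasDerivAt_exp θ).pow 2).const_mul (c.1 ^ 2)).sub
          (((hasDerivAt_expneg θ).pow 2).const_mul (c.2.1 ^ 2))).sub
          ((hasDerivAt_id θ).const_mul Λ)
        exact h.congr_deriv (by push_cast; ring))
      (fun θ => by
        have h := ((((Real.hasDerivAt_exp θ).pow 2).const_mul (c.2.2 ^ 2)).sub
          (((hasDerivAt_expneg θ).pow 2).const_mul ((c.1 + c.2.1 - c.2.2) ^ 2))).sub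
          ((hasDerivAt_id θ).const_mul Λ)
        exact h.congr_deriv (by push_cast; ring))]
  have e1 : Real.exp (-π + α) = Real.exp α / Real.exp π := by
    rw [show (-π + α) = α - π by ring, Real.exp_sub]
  have e2 : Real.exp (-(-π + α)) = Real.exp π / Real.exp α := by
    rw [show (-(-π + α)) = π - α by ring, Real.exp_sub]
  simp only [e1, e2, Real.exp_neg, Real.exp_zero, qQ]
  have h1 : Real.exp α ≠ 0 := (Real.exp_pos α).ne'
  have h2 : Real.exp π ≠ 0 := (Real.exp_pos π).ne'
  field_simp
  ring

lemma int2 (α a : ℝ) (hα : α ∈ Ioo 0 π) (c : ℝ × ℝ × ℝ) :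
    ∫ θ in Ioo (-π + α) α, stg a θ * gpwd c θ
      = qL (Real.exp α) (Real.exp π) a c := by
  have hp : -π + α ≤ 0 := by linarith [hα.2]
  rw [pieceInt (-π + α) α hp hα.1 _
      (fun θ => a * (c.1 * Real.exp θ - c.2.1 * Real.exp (-θ)))
      (fun θ => c.2.2 * Real.exp θ - (c.1 + c.2.1 - c.2.2) * Real.exp (-θ))
      (fun θ => a * (c.1 * Real.exp θ + c.2.1 * Real.exp (-θ)))
      (fun θ => c.2.2 * Real.exp θ + (c.1 + c.2.1 - c.2.2) * Real.exp (-θ))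
      (fun θ hθ => by simp only [stg, gpwd, if_pos hθ.2, if_pos hθ.2.le])
      (fun θ hθ => by
        simp only [stg, gpwd, if_neg (not_lt.2 hθ.1.le), if_neg (not_le.2 hθ.1), one_mul])
      (by fun_prop) (by fun_prop)
      (fun θ => by
        have h := (((Real.hasDerivAt_exp θ).const_mul c.1).add
          ((hasDerivAt_expneg θ).const_mul c.2.1)).const_mul a
        exact h.congr_deriv (by ring))
      (fun θ => by
        have h := ((Real.hasDerivAt_exp θ).const_mul c.2.2).add
          ((hasDerivAt_expneg θ).const_mul (c.1 + c.2.1 - c.2.2))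
        exact h.congr_deriv (by ring))]
  have e1 : Real.exp (-π + α) = Real.exp α / Real.exp π := by
    rw [show (-π + α) = α - π by ring, Real.exp_sub]
  have e2 : Real.exp (-(-π + α)) = Real.exp π / Real.exp α := by
    rw [show (-(-π + α)) = π - α by ring, Real.exp_sub]
  simp only [e1, e2, Real.exp_neg, Real.exp_zero, qL, ell1, ell2, ell3]
  have h1 : Real.exp α ≠ 0 := (Real.exp_pos α).ne'
  have h2 : Real.exp π ≠ 0 := (Real.exp_pos π).ne'
  field_simp
  ring

lemma int3 (ω α γ a : ℝ) (hα : α ∈ Ioo 0 π) :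
    ∫ θ in Ioo (-π + α) α,
        (ω ^ 2 + stg a θ ^ 2 * Real.sin γ ^ 2 * Real.sin θ ^ 2
          + (1 / 4) * stg a θ ^ 2 * Real.cos γ ^ 2)
      = π * ω ^ 2 + Sval α γ a := by
  have hp : -π + α ≤ 0 := by linarith [hα.2]
  rw [pieceInt (-π + α) α hp hα.1 _
      (fun θ => ω ^ 2 + a ^ 2 * Real.sin γ ^ 2 * Real.sin θ ^ 2
        + (1 / 4) * a ^ 2 * Real.cos γ ^ 2)
      (fun θ => ω ^ 2 + 1 ^ 2 * Real.sin γ ^ 2 * Real.sin θ ^ 2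
        + (1 / 4) * 1 ^ 2 * Real.cos γ ^ 2)
      (fun θ => (ω ^ 2 + (1 / 4) * a ^ 2 * Real.cos γ ^ 2) * θ
        + a ^ 2 * Real.sin γ ^ 2 * (θ / 2 - Real.sin θ * Real.cos θ / 2))
      (fun θ => (ω ^ 2 + (1 / 4) * 1 ^ 2 * Real.cos γ ^ 2) * θ
        + 1 ^ 2 * Real.sin γ ^ 2 * (θ / 2 - Real.sin θ * Real.cos θ / 2))
      (fun θ hθ => by simp only [stg, if_pos hθ.2])
      (fun θ hθ => by simp only [stg, if_neg (not_lt.2 hθ.1.le)])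
      (by fun_prop) (by fun_prop)
      (fun θ => by
        have h := (((hasDerivAt_id θ).const_mul (ω ^ 2 + (1 / 4) * a ^ 2 * Real.cos γ ^ 2)).add
          ((((hasDerivAt_id θ).div_const 2).sub
            (((Real.hasDerivAt_sin θ).mul (Real.hasDerivAt_cos θ)).div_const 2)).const_mul
            (a ^ 2 * Real.sin γ ^ 2)))
        exact h.congr_deriv (by
          linear_combination (-(a ^ 2 * Real.sin γ ^ 2 / 2)) * (Real.sin_sq_add_cos_sq θ)))
      (fun θ => by
        have h := (((hasDerivAt_id θ).const_mul (ω ^ 2 + (1 / 4) * 1 ^ 2 * Real.cos γ ^ 2)).add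
          ((((hasDerivAt_id θ).div_const 2).sub
            (((Real.hasDerivAt_sin θ).mul (Real.hasDerivAt_cos θ)).div_const 2)).const_mul
            (1 ^ 2 * Real.sin γ ^ 2)))
        exact h.congr_deriv (by
          linear_combination (-(1 ^ 2 * Real.sin γ ^ 2 / 2)) * (Real.sin_sq_add_cos_sq θ)))]
  have hs : Real.sin (-π + α) = -Real.sin α := by
    rw [show (-π + α) = α - π by ring, Real.sin_sub]; simp
  have hc : Real.cos (-π + α) = -Real.cos α := by
    rw [show (-π + α) = α - π by ring, Real.cos_sub]; simp
  simp only [hs, hc, Real.sin_zero, Real.cos_zero, Sval]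
  ring

lemma grad1 (X Y a : ℝ) (hX : 1 < X) (hXY : X < Y) :
    2 * (1 - X ^ 2 / Y ^ 2) * (dd X Y a).1
      + 2 * (1 - 1 / X ^ 2) * ((dd X Y a).1 + (dd X Y a).2.1 - (dd X Y a).2.2)
      = ell1 X Y a := by
  have h0 : (0:ℝ) < X := lt_trans one_pos hX
  have h1 : X ≠ 0 := h0.ne'
  have h2 : Y ≠ 0 := (lt_trans h0 hXY).ne'
  have h3 : Y ^ 2 - X ^ 2 ≠ 0 := by nlinarith
  have h4 : X ^ 2 - 1 ≠ 0 := by nlinarith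
  have h5 : Y ^ 2 - 1 ≠ 0 := by nlinarith
  simp only [dd, wst, ell1, ell2, ell3]
  field_simp
  ring

lemma grad2 (X Y a : ℝ) (hX : 1 < X) (hXY : X < Y) :
    2 * (Y ^ 2 / X ^ 2 - 1) * (dd X Y a).2.1
      + 2 * (1 - 1 / X ^ 2) * ((dd X Y a).1 + (dd X Y a).2.1 - (dd X Y a).2.2)
      = ell2 X Y a := by
  have h0 : (0:ℝ) < X := lt_trans one_pos hX
  have h1 : X ≠ 0 := h0.ne'
  have h2 : Y ≠ 0 := (lt_trans h0 hXY).ne'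
  have h3 : Y ^ 2 - X ^ 2 ≠ 0 := by nlinarith
  have h4 : X ^ 2 - 1 ≠ 0 := by nlinarith
  have h5 : Y ^ 2 - 1 ≠ 0 := by nlinarith
  simp only [dd, wst, ell1, ell2, ell3]
  field_simp
  ring

lemma grad3 (X Y a : ℝ) (hX : 1 < X) (hXY : X < Y) :
    2 * (X ^ 2 - 1) * (dd X Y a).2.2
      - 2 * (1 - 1 / X ^ 2) * ((dd X Y a).1 + (dd X Y a).2.1 - (dd X Y a).2.2)
      = ell3 X := by
  have h0 : (0:ℝ) < X := lt_trans one_pos hX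
  have h1 : X ≠ 0 := h0.ne'
  have h2 : Y ≠ 0 := (lt_trans h0 hXY).ne'
  have h3 : Y ^ 2 - X ^ 2 ≠ 0 := by nlinarith
  have h4 : X ^ 2 - 1 ≠ 0 := by nlinarith
  have h5 : Y ^ 2 - 1 ≠ 0 := by nlinarith
  simp only [dd, wst, ell1, ell2, ell3]
  field_simp
  ring

lemma expand (X Y a t : ℝ) (hX : 1 < X) (hXY : X < Y) (c : ℝ × ℝ × ℝ) :
    qQ X Y c - t * qL X Y a c
      = (qQ X Y (t * (dd X Y a).1, t * (dd X Y a).2.1, t * (dd X Y a).2.2)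
          - t * qL X Y a (t * (dd X Y a).1, t * (dd X Y a).2.1, t * (dd X Y a).2.2))
        + qQ X Y (c.1 - t * (dd X Y a).1, c.2.1 - t * (dd X Y a).2.1,
            c.2.2 - t * (dd X Y a).2.2) := by
  have g1 := grad1 X Y a hX hXY
  have g2 := grad2 X Y a hX hXY
  have g3 := grad3 X Y a hX hXY
  simp only [qQ, qL]
  linear_combination (t * (c.1 - t * (dd X Y a).1)) * g1
    + (t * (c.2.1 - t * (dd X Y a).2.1)) * g2
    + (t * (c.2.2 - t * (dd X Y a).2.2)) * g3

lemma valueAt (X Y a t : ℝ) (hX : 1 < X) (hXY : X < Y) :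
    qQ X Y (t * (dd X Y a).1, t * (dd X Y a).2.1, t * (dd X Y a).2.2)
      - t * qL X Y a (t * (dd X Y a).1, t * (dd X Y a).2.1, t * (dd X Y a).2.2)
      = -t ^ 2 * qQ X Y (dd X Y a) := by
  have g1 := grad1 X Y a hX hXY
  have g2 := grad2 X Y a hX hXY
  have g3 := grad3 X Y a hX hXY
  simp only [qQ, qL]
  linear_combination (t ^ 2 * (dd X Y a).1) * g1 + (t ^ 2 * (dd X Y a).2.1) * g2
    + (t ^ 2 * (dd X Y a).2.2) * g3

lemma qQ_pos_coeffs (X Y : ℝ) (hX : 1 < X) (hXY : X < Y) :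
    0 < 1 - X ^ 2 / Y ^ 2 ∧ 0 < Y ^ 2 / X ^ 2 - 1 ∧ 0 < X ^ 2 - 1 ∧ 0 < 1 - 1 / X ^ 2 := by
  have h0 : (0:ℝ) < X := lt_trans one_pos hX
  have h0' : (0:ℝ) < Y := lt_trans h0 hXY
  refine ⟨?_, ?_, by nlinarith, ?_⟩
  · rw [sub_pos, div_lt_one (by positivity)]; nlinarith
  · rw [sub_pos, lt_div_iff₀ (by positivity)]; nlinarith
  · rw [sub_pos, div_lt_one (by positivity)]; nlinarith

lemma qQ_nonneg (X Y : ℝ) (hX : 1 < X) (hXY : X < Y) (c : ℝ × ℝ × ℝ) : 0 ≤ qQ X Y c := by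
  obtain ⟨hA1, hA2, hA3, hA4⟩ := qQ_pos_coeffs X Y hX hXY
  unfold qQ
  nlinarith [mul_nonneg hA1.le (sq_nonneg c.1), mul_nonneg hA2.le (sq_nonneg c.2.1),
    mul_nonneg hA3.le (sq_nonneg c.2.2), mul_nonneg hA4.le (sq_nonneg (c.1 + c.2.1 - c.2.2))]

lemma qQ_eq_zero (X Y : ℝ) (hX : 1 < X) (hXY : X < Y) (c : ℝ × ℝ × ℝ) (h : qQ X Y c = 0) :
    c.1 = 0 ∧ c.2.1 = 0 ∧ c.2.2 = 0 := by
  obtain ⟨hA1, hA2, hA3, hA4⟩ := qQ_pos_coeffs X Y hX hXY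
  unfold qQ at h
  have k1 : c.1 ^ 2 ≤ 0 := by
    nlinarith [mul_nonneg hA2.le (sq_nonneg c.2.1), mul_nonneg hA3.le (sq_nonneg c.2.2),
      mul_nonneg hA4.le (sq_nonneg (c.1 + c.2.1 - c.2.2))]
  have k2 : c.2.1 ^ 2 ≤ 0 := by
    nlinarith [mul_nonneg hA1.le (sq_nonneg c.1), mul_nonneg hA3.le (sq_nonneg c.2.2),
      mul_nonneg hA4.le (sq_nonneg (c.1 + c.2.1 - c.2.2))]
  have k3 : c.2.2 ^ 2 ≤ 0 := by
    nlinarith [mul_nonneg hA1.le (sq_nonneg c.1), mul_nonneg hA2.le (sq_nonneg c.2.1),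
      mul_nonneg hA4.le (sq_nonneg (c.1 + c.2.1 - c.2.2))]
  exact ⟨pow_eq_zero_iff two_ne_zero |>.1 (le_antisymm k1 (sq_nonneg _)),
    pow_eq_zero_iff two_ne_zero |>.1 (le_antisymm k2 (sq_nonneg _)),
    pow_eq_zero_iff two_ne_zero |>.1 (le_antisymm k3 (sq_nonneg _))⟩

lemma qQ_dd_eq (X Y a : ℝ) (hX : 1 < X) (hXY : X < Y) :
    qQ X Y (dd X Y a) = qL X Y a (dd X Y a) / 2 := by
  have g1 := grad1 X Y a hX hXY
  have g2 := grad2 X Y a hX hXY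
  have g3 := grad3 X Y a hX hXY
  simp only [qQ, qL]
  linear_combination ((dd X Y a).1 / 2) * g1 + ((dd X Y a).2.1 / 2) * g2
    + ((dd X Y a).2.2 / 2) * g3

set_option maxHeartbeats 1600000 in
lemma key (α γ a : ℝ) (hα : 0 < α) (hαπ : α < π) :
    Sval α γ a / 2
      - π * Real.cos γ ^ 2 * qQ (Real.exp α) (Real.exp π) (dd (Real.exp α) (Real.exp π) a) / 8
      = Aconst α γ a := by
  have hX : 1 < Real.exp α := Real.one_lt_exp_iff.2 hα
  have hXY : Real.exp α < Real.exp π := Real.exp_lt_exp.2 hαπ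
  set X := Real.exp α with hXdef
  set Y := Real.exp π with hYdef
  have h0 : (0:ℝ) < X := lt_trans one_pos hX
  have h0' : (0:ℝ) < Y := lt_trans h0 hXY
  have h1 : X ≠ 0 := h0.ne'
  have h2 : Y ≠ 0 := h0'.ne'
  have h3 : Y ^ 2 - X ^ 2 ≠ 0 := by nlinarith
  have h4 : X ^ 2 - 1 ≠ 0 := by nlinarith
  have h5 : Y ^ 2 - 1 ≠ 0 := by nlinarith
  have e1 : Real.exp (π - α) = Y / X := by rw [Real.exp_sub]
  have e2 : Real.exp (2 * π - 2 * α) = Y ^ 2 / X ^ 2 := by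
    rw [show 2 * π - 2 * α = (π + π) - (α + α) by ring, Real.exp_sub, Real.exp_add,
      Real.exp_add, ← hXdef, ← hYdef]
    ring
  have e3 : Real.exp (2 * α) = X ^ 2 := by
    rw [show 2 * α = α + α by ring, Real.exp_add, ← hXdef]; ring
  have e4 : Real.exp (2 * π) = Y ^ 2 := by
    rw [show 2 * π = π + π by ring, Real.exp_add, ← hYdef]; ring
  have hY1 : (1:ℝ) < Y := hX.trans hXY
  have hden : Y - Y⁻¹ ≠ 0 := by
    have hp : 0 < Y - Y⁻¹ := by
      nlinarith [mul_pos (sub_pos.2 hY1) (inv_pos.2 h0'), mul_inv_cancel₀ h2]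
    exact hp.ne'
  have e5 : Real.cosh π / Real.sinh π = (Y ^ 2 + 1) / (Y ^ 2 - 1) := by
    rw [Real.cosh_eq, Real.sinh_eq, Real.exp_neg, ← hYdef]
    rw [div_eq_div_iff (div_ne_zero hden two_ne_zero) h5]
    field_simp
  have e6 : Real.cosh π = (Y ^ 2 + 1) / (2 * Y) := by
    rw [Real.cosh_eq, Real.exp_neg, ← hYdef]
    field_simp
  have e7 : Real.cos (2 * γ) = 1 - 2 * Real.sin γ ^ 2 := by
    rw [Real.cos_two_mul', Real.cos_sq']; ring
  have e8 : Real.sin (2 * α) = 2 * Real.sin α * Real.cos α := Real.sin_two_mul α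
  have e9 : Real.cos γ ^ 2 = 1 - Real.sin γ ^ 2 := Real.cos_sq' γ
  rw [qQ_dd_eq X Y a hX hXY, Aconst, Sval, e1, e2, e3, e4, e5, e6, e7, e8, e9]
  simp only [qL, dd, wst, ell1, ell2, ell3]
  field_simp
  ring

end Aux

/-- **Quadratic minimization yielding the polynomial `P`.** `J` attains its infimum over `ℝ³`
at a unique point, with minimum value `A[α,γ,a] (1/ω)² - (π/2) Λ (1/ω) + π/2`. -/
theorem J_attains_min (ω α γ a Λ : ℝ) (hω : 0 < ω) (hα : α ∈ Ioo 0 π)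
    (hγ : γ ∈ Icc 0 (π / 2)) (ha : a ∈ Ico (-1 : ℝ) 1) (ha0 : a ≠ 0) :
    ∃ c : ℝ × ℝ × ℝ,
      (∀ c' : ℝ × ℝ × ℝ, Jfun ω α γ a Λ c ≤ Jfun ω α γ a Λ c') ∧
      (∀ c' : ℝ × ℝ × ℝ,
        (∀ c'' : ℝ × ℝ × ℝ, Jfun ω α γ a Λ c' ≤ Jfun ω α γ a Λ c'') → c' = c) ∧
      Jfun ω α γ a Λ c
        = Aconst α γ a * (1 / ω) ^ 2 - (π / 2) * Λ * (1 / ω) + π / 2 := by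
  have hX : 1 < Real.exp α := Real.one_lt_exp_iff.2 hα.1
  have hXY : Real.exp α < Real.exp π := Real.exp_lt_exp.2 hα.2
  set X := Real.exp α with hXdef
  set Y := Real.exp π with hYdef
  set K := Real.sqrt π * Real.cos γ / (4 * ω ^ ((3 : ℝ) / 2)) with hKdef
  have hωne : ω ≠ 0 := hω.ne'
  have hJ : ∀ c : ℝ × ℝ × ℝ, Jfun ω α γ a Λ c
      = (1 / (2 * ω)) * (qQ X Y c - Λ * π) - K * qL X Y a c
        + (1 / (2 * ω ^ 2)) * (π * ω ^ 2 + Sval α γ a) := by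
    intro c
    unfold Jfun
    rw [int1 α Λ hα c, int2 α a hα c, int3 ω α γ a hα]
  have hcancel : 2 * ω * K * (1 / (2 * ω)) = K := by field_simp
  set c₀ : ℝ × ℝ × ℝ := (2 * ω * K * (dd X Y a).1, 2 * ω * K * (dd X Y a).2.1,
    2 * ω * K * (dd X Y a).2.2) with hc₀def
  have hexp : ∀ c' : ℝ × ℝ × ℝ, Jfun ω α γ a Λ c'
      = Jfun ω α γ a Λ c₀ + (1 / (2 * ω)) * qQ X Y
          (c'.1 - 2 * ω * K * (dd X Y a).1, c'.2.1 - 2 * ω * K * (dd X Y a).2.1,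
            c'.2.2 - 2 * ω * K * (dd X Y a).2.2) := by
    intro c'
    rw [hJ c', hJ c₀]
    have hE := expand X Y a (2 * ω * K) hX hXY c'
    rw [hc₀def]
    linear_combination (1 / (2 * ω)) * hE
      + (qL X Y a c' - qL X Y a (2 * ω * K * (dd X Y a).1, 2 * ω * K * (dd X Y a).2.1,
          2 * ω * K * (dd X Y a).2.2)) * hcancel
  have hmin0 : ∀ c' : ℝ × ℝ × ℝ, Jfun ω α γ a Λ c₀ ≤ Jfun ω α γ a Λ c' := by
    intro c'
    rw [hexp c']
    have hq := qQ_nonneg X Y hX hXY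
      (c'.1 - 2 * ω * K * (dd X Y a).1, c'.2.1 - 2 * ω * K * (dd X Y a).2.1,
        c'.2.2 - 2 * ω * K * (dd X Y a).2.2)
    have h2ω : (0:ℝ) < 1 / (2 * ω) := by positivity
    nlinarith
  refine ⟨c₀, hmin0, ?_, ?_⟩
  · rintro ⟨c1, c2, c3⟩ hmin
    have h1 := hmin c₀
    have heq : Jfun ω α γ a Λ (c1, c2, c3) = Jfun ω α γ a Λ c₀ :=
      le_antisymm h1 (hmin0 (c1, c2, c3))
    have h3 := hexp (c1, c2, c3)
    have h2ω : (1 / (2 * ω)) ≠ 0 := by positivity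
    have h4 : qQ X Y (c1 - 2 * ω * K * (dd X Y a).1, c2 - 2 * ω * K * (dd X Y a).2.1,
        c3 - 2 * ω * K * (dd X Y a).2.2) = 0 := by
      have h5 : (1 / (2 * ω)) * qQ X Y (c1 - 2 * ω * K * (dd X Y a).1,
          c2 - 2 * ω * K * (dd X Y a).2.1, c3 - 2 * ω * K * (dd X Y a).2.2) = 0 := by
        rw [heq] at h3; linarith
      exact (mul_eq_zero.1 h5).resolve_left h2ω
    obtain ⟨z1, z2, z3⟩ := qQ_eq_zero X Y hX hXY _ h4
    simp only [] at z1 z2 z3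
    rw [hc₀def]
    refine Prod.ext ?_ (Prod.ext ?_ ?_)
    · simpa using sub_eq_zero.1 z1
    · simpa using sub_eq_zero.1 z2
    · simpa using sub_eq_zero.1 z3
  · rw [hJ c₀]
    have hv := valueAt X Y a (2 * ω * K) hX hXY
    have hkey := key α γ a hα.1 hα.2
    have hr : (ω ^ ((3 : ℝ) / 2)) ^ 2 = ω ^ 3 := by
      rw [← Real.rpow_natCast (ω ^ ((3 : ℝ) / 2)) 2, ← Real.rpow_mul hω.le]
      norm_num
    have hrne : ω ^ ((3 : ℝ) / 2) ≠ 0 := (Real.rpow_pos_of_pos hω _).ne'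
    have hsq : Real.sqrt π ^ 2 = π := Real.sq_sqrt Real.pi_pos.le
    have hK2 : (2 * ω * K) ^ 2 = π * Real.cos γ ^ 2 / (4 * ω) := by
      have hsplit : (2 * ω * K) ^ 2
          = 4 * ω ^ 2 * (Real.sqrt π ^ 2 * Real.cos γ ^ 2) / (16 * (ω ^ ((3 : ℝ) / 2)) ^ 2) := by
        rw [hKdef]; field_simp
        ring
      rw [hsplit, hsq, hr, div_eq_div_iff (by positivity) (by positivity)]
      ring
    have hstep : (1 / (2 * ω)) * (qQ X Y c₀ - Λ * π) - K * qL X Y a c₀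
        + (1 / (2 * ω ^ 2)) * (π * ω ^ 2 + Sval α γ a)
        = (1 / (2 * ω)) * (-(2 * ω * K) ^ 2 * qQ X Y (dd X Y a))
          - Λ * π * (1 / (2 * ω)) + (1 / (2 * ω ^ 2)) * (π * ω ^ 2 + Sval α γ a) := by
      rw [hc₀def]
      linear_combination (1 / (2 * ω)) * hv
        + (qL X Y a (2 * ω * K * (dd X Y a).1, 2 * ω * K * (dd X Y a).2.1,
            2 * ω * K * (dd X Y a).2.2)) * hcancel
    rw [hstep, hK2, ← hkey]
    field_simp
    ring

end MagStep
end
end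

section
/- (Remark 1.4) For every a ∈ [−1,1) with a ≠ 0, every α ∈ (0,π) and every γ ∈ [0,π/2], the constant A[α,γ,a] is strictly positive. Consequently, with Θ₀^low := 0.590106125 − 10⁻⁹, the quadratic function x ↦ A[α,γ,a]·x² − (π/2)·|a|·Θ₀^low·x + π/2 attains its minimum over (0,∞) at the unique point x̄ = π·|a|·Θ₀^low/(4·A[α,γ,a]) > 0. -/
open MeasureTheory Real Set Filter

noncomputable section

namespace MagStep

/-- The explicit lower bound of the de Gennes constant. -/
def ThetaLow : ℝ := 0.590106125 - 1e-9

/-- `x̄ = π |a| Θ₀^low / (4 A[α,γ,a])`. -/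
def xbar (α γ a : ℝ) : ℝ := π * |a| * ThetaLow / (4 * Aconst α γ a)

/-- The quadratic `x ↦ A[α,γ,a] x² - (π/2) |a| Θ₀^low x + π/2`. -/
def Pq (α γ a x : ℝ) : ℝ := Aconst α γ a * x ^ 2 - (π / 2) * |a| * ThetaLow * x + π / 2


private lemma exp_sq' (x : ℝ) : Real.exp x ^ 2 = Real.exp (2 * x) := by
  rw [pow_two, ← Real.exp_add, two_mul]

private lemma aux_mono1 (k α : ℝ) (h0 : 0 ≤ α) (hπ : α < π) :
    Real.sinh π * (0 + ((1 + k ^ 2) * Real.cosh (π - 0) - 2 * k) / Real.sinh (π - 0)) ≤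
      Real.sinh π * (α + ((1 + k ^ 2) * Real.cosh (π - α) - 2 * k) / Real.sinh (π - α)) := by
  have hsπ : 0 < Real.sinh π := Real.sinh_pos_iff.mpr Real.pi_pos
  set f : ℝ → ℝ := fun t =>
    Real.sinh π * (t + ((1 + k ^ 2) * Real.cosh (π - t) - 2 * k) / Real.sinh (π - t)) with hf
  have hder : ∀ t : ℝ, t < π → HasDerivAt f
      (Real.sinh π * (1 + ((1 + k ^ 2) * -Real.sinh (π - t) * Real.sinh (π - t) -
        ((1 + k ^ 2) * Real.cosh (π - t) - 2 * k) * -Real.cosh (π - t)) /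
          Real.sinh (π - t) ^ 2)) t := by
    intro t htπ
    have hs0 : Real.sinh (π - t) ≠ 0 := ne_of_gt (Real.sinh_pos_iff.mpr (by linarith))
    have h1 : HasDerivAt (fun u : ℝ => π - u) (-1) t := by
      simpa using (hasDerivAt_id t).const_sub π
    have hcsh : HasDerivAt (fun u : ℝ => Real.cosh (π - u)) (-Real.sinh (π - t)) t := by
      simpa [Function.comp_def] using (Real.hasDerivAt_cosh (π - t)).comp t h1
    have hssh : HasDerivAt (fun u : ℝ => Real.sinh (π - u)) (-Real.cosh (π - t)) t := by
      simpa [Function.comp_def] using (Real.hasDerivAt_sinh (π - t)).comp t h1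
    have hnum : HasDerivAt (fun u : ℝ => (1 + k ^ 2) * Real.cosh (π - u) - 2 * k)
        ((1 + k ^ 2) * -Real.sinh (π - t)) t := (hcsh.const_mul _).sub_const _
    have hq := hnum.div hssh hs0
    have := ((hasDerivAt_id' (x := t)).add hq).const_mul (Real.sinh π)
    simpa [hf] using this
  have hmono : MonotoneOn f (Set.Icc 0 α) := by
    apply monotoneOn_of_deriv_nonneg (convex_Icc 0 α)
    · intro t ht
      exact (hder t (lt_of_le_of_lt ht.2 hπ)).continuousAt.continuousWithinAt
    · intro t ht
      rw [interior_Icc] at ht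
      exact (hder t (lt_trans ht.2 hπ)).differentiableAt.differentiableWithinAt
    · intro t ht
      rw [interior_Icc] at ht
      have htπ : t < π := lt_trans ht.2 hπ
      rw [(hder t htπ).deriv]
      have hs0 : 0 < Real.sinh (π - t) := Real.sinh_pos_iff.mpr (by linarith)
      have hc2 : Real.cosh (π - t) ^ 2 = Real.sinh (π - t) ^ 2 + 1 := Real.cosh_sq _
      have key : 1 + ((1 + k ^ 2) * -Real.sinh (π - t) * Real.sinh (π - t) -
          ((1 + k ^ 2) * Real.cosh (π - t) - 2 * k) * -Real.cosh (π - t)) /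
            Real.sinh (π - t) ^ 2
          = (Real.cosh (π - t) - k) ^ 2 / Real.sinh (π - t) ^ 2 := by
        field_simp
        linear_combination k ^ 2 * hc2
      rw [key]
      exact mul_nonneg hsπ.le (by positivity)
  exact hmono ⟨le_refl 0, h0⟩ ⟨h0, le_refl α⟩ h0

private lemma aux_mono2 :
    Monotone fun t : ℝ => t + 2 * (Real.sinh ((π - t) / 2) / Real.cosh ((π - t) / 2)) := by
  have hder : ∀ t : ℝ, HasDerivAt
      (fun t : ℝ => t + 2 * (Real.sinh ((π - t) / 2) / Real.cosh ((π - t) / 2)))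
      (1 + 2 * ((Real.cosh ((π - t) / 2) * (-1 / 2) * Real.cosh ((π - t) / 2) -
        Real.sinh ((π - t) / 2) * (Real.sinh ((π - t) / 2) * (-1 / 2))) /
          Real.cosh ((π - t) / 2) ^ 2)) t := by
    intro t
    have h1 : HasDerivAt (fun u : ℝ => (π - u) / 2) (-1 / 2) t := by
      simpa using ((hasDerivAt_id t).const_sub π).div_const 2
    have hs : HasDerivAt (fun u : ℝ => Real.sinh ((π - u) / 2))
        (Real.cosh ((π - t) / 2) * (-1 / 2)) t := by
      simpa [Function.comp_def] using (Real.hasDerivAt_sinh ((π - t) / 2)).comp t h1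
    have hc : HasDerivAt (fun u : ℝ => Real.cosh ((π - u) / 2))
        (Real.sinh ((π - t) / 2) * (-1 / 2)) t := by
      simpa [Function.comp_def] using (Real.hasDerivAt_cosh ((π - t) / 2)).comp t h1
    have hq := hs.div hc (ne_of_gt (Real.cosh_pos _))
    exact (hasDerivAt_id' (x := t)).add (hq.const_mul 2)
  apply monotone_of_deriv_nonneg
  · exact fun t => (hder t).differentiableAt
  · intro t
    rw [(hder t).deriv]
    have hid := Real.cosh_sq_sub_sinh_sq ((π - t) / 2)
    have hcp := Real.cosh_pos ((π - t) / 2)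
    have key : (1 : ℝ) + 2 * ((Real.cosh ((π - t) / 2) * (-1 / 2) * Real.cosh ((π - t) / 2) -
        Real.sinh ((π - t) / 2) * (Real.sinh ((π - t) / 2) * (-1 / 2))) /
          Real.cosh ((π - t) / 2) ^ 2)
        = 1 - 1 / Real.cosh ((π - t) / 2) ^ 2 := by
      field_simp
      linear_combination (-1 : ℝ) * hid
    rw [key]
    have h1 : 1 / Real.cosh ((π - t) / 2) ^ 2 ≤ 1 := by
      rw [div_le_one (by positivity)]
      nlinarith [Real.one_le_cosh ((π - t) / 2)]
    linarith

set_option maxHeartbeats 1000000 in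
private lemma bracket_pos (a α γ : ℝ) (ha1 : -1 ≤ a) (ha2 : a < 1) (ha0 : a ≠ 0)
    (hα0 : 0 < α) (hαπ : α < π) :
    0 < π * Real.cos γ ^ 2 *
        (4 * (a - 1) * ((a - Real.exp π) * Real.exp (π - α) + (a * Real.exp π - 1) * Real.exp α)
          - (a - 1) ^ 2 * (Real.exp (2 * π - 2 * α) + Real.exp (2 * α))
          - 2 * Real.exp π * (-4 * a + (3 - 2 * a + 3 * a ^ 2) * Real.cosh π))
      + 4 * (Real.exp (2 * π) - 1) *
          (-(a ^ 2 * (π - α) + α) * (-3 + Real.cos (2 * γ))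
            + 2 * (a ^ 2 - 1) * Real.sin γ ^ 2 * Real.sin (2 * α)) := by
  have hπ := Real.pi_pos
  have hsπ : 0 < Real.sinh π := Real.sinh_pos_iff.mpr hπ
  set E := Real.exp π with hEdef
  set y := Real.exp ((π - α) / 2) with hy
  have hE1 : 1 < E := by
    rw [hEdef, show (1:ℝ) = Real.exp 0 from (Real.exp_zero).symm]
    exact Real.exp_lt_exp.mpr hπ
  have hy1 : 1 < y := by
    rw [hy, show (1:ℝ) = Real.exp 0 from (Real.exp_zero).symm]
    exact Real.exp_lt_exp.mpr (by linarith)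
  have hyp : 0 < y := by linarith
  have hEp : 0 < E := by linarith
  have hEa : Real.exp (π - α) = y ^ 2 := by
    rw [hy, ← Real.exp_nat_mul]; congr 1; push_cast; try ring
  have hea : Real.exp α = E / y ^ 2 := by
    rw [hy, hEdef, ← Real.exp_nat_mul, ← Real.exp_sub]; congr 1; push_cast; try ring
  have h2pa : Real.exp (2 * π - 2 * α) = y ^ 4 := by
    rw [hy, ← Real.exp_nat_mul]; congr 1; push_cast; try ring
  have h2a : Real.exp (2 * α) = E ^ 2 / y ^ 4 := by
    rw [hy, hEdef, ← Real.exp_nat_mul, ← Real.exp_nat_mul, ← Real.exp_sub]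
    congr 1; push_cast; try ring
  have he2p : Real.exp (2 * π) = E ^ 2 := by
    rw [hEdef, pow_two, ← Real.exp_add, two_mul]
  have hch : Real.cosh π = (E + E⁻¹) / 2 := by rw [Real.cosh_eq, Real.exp_neg, hEdef]
  have hsh : Real.sinh π = (E - E⁻¹) / 2 := by rw [Real.sinh_eq, Real.exp_neg, hEdef]
  have hchpa : Real.cosh (π - α) = (y ^ 2 + (y ^ 2)⁻¹) / 2 := by
    rw [Real.cosh_eq, Real.exp_neg, hEa]
  have hshpa : Real.sinh (π - α) = (y ^ 2 - (y ^ 2)⁻¹) / 2 := by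
    rw [Real.sinh_eq, Real.exp_neg, hEa]
  have hsh2 : Real.sinh ((π - α) / 2) = (y - y⁻¹) / 2 := by
    rw [Real.sinh_eq, Real.exp_neg, ← hy]
  have hch2 : Real.cosh ((π - α) / 2) = (y + y⁻¹) / 2 := by
    rw [Real.cosh_eq, Real.exp_neg, ← hy]
  set K := (1 - a) * Real.cosh (π - α) + a with hK
  have hyne : y ≠ 0 := ne_of_gt hyp
  have hEne : E ≠ 0 := ne_of_gt hEp
  have hy4 : y ^ 4 - 1 ≠ 0 := ne_of_gt (sub_pos.mpr (one_lt_pow₀ hy1 (by norm_num)))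
  have hy21 : y ^ 2 + 1 ≠ 0 := by positivity
  -- numeric facts
  have hT : 0 < α + a ^ 2 * (π - α) := by nlinarith [sq_nonneg a]
  have h8 : 0 < 8 - 2 * π := by nlinarith [Real.pi_lt_d2]
  have hE2 : (0:ℝ) < E ^ 2 - 1 := sub_pos.mpr (one_lt_pow₀ hE1 (by norm_num))
  have hasq : 0 < a ^ 2 := by positivity
  have hsin2 : Real.sin (2 * α) < 2 * α := Real.sin_lt (by linarith)
  have ha2' : a ^ 2 ≤ 1 := by nlinarith
  -- monotonicity consequences
  have L1 := aux_mono1 K α hα0.le hαπ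
  have L1' : (1 + K ^ 2) * Real.cosh π - 2 * K ≤
      Real.sinh π * (α + ((1 + K ^ 2) * Real.cosh (π - α) - 2 * K) / Real.sinh (π - α)) := by
    rw [sub_zero, zero_add, mul_comm, div_mul_cancel₀ _ (ne_of_gt hsπ)] at L1
    exact L1
  have L2 : α + 2 * (Real.sinh ((π - α) / 2) / Real.cosh ((π - α) / 2)) ≤ π := by
    have h := aux_mono2 hαπ.le
    simpa using h
  have hM : 0 ≤ (Real.sinh π * (α + ((1 + K ^ 2) * Real.cosh (π - α) - 2 * K) /
        Real.sinh (π - α)) - ((1 + K ^ 2) * Real.cosh π - 2 * K))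
      + a ^ 2 * Real.sinh π *
        (π - (α + 2 * (Real.sinh ((π - α) / 2) / Real.cosh ((π - α) / 2)))) := by
    have t1 := sub_nonneg.mpr L1'
    have t2 := sub_nonneg.mpr L2
    have t3 : 0 ≤ a ^ 2 * Real.sinh π := by positivity
    exact add_nonneg t1 (mul_nonneg t3 t2)
  -- division normalizations
  have hs2pos : 0 < Real.sinh (π - α) := Real.sinh_pos_iff.mpr (by linarith)
  have hq1 : ((1 + K ^ 2) * Real.cosh (π - α) - 2 * K) / Real.sinh (π - α)
      = (2 * y ^ 2 * ((1 + K ^ 2) * Real.cosh (π - α) - 2 * K)) / (y ^ 4 - 1) := by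
    rw [div_eq_div_iff (ne_of_gt hs2pos) hy4, hshpa]
    field_simp
  have hq2 : Real.sinh ((π - α) / 2) / Real.cosh ((π - α) / 2) = (y ^ 2 - 1) / (y ^ 2 + 1) := by
    have hc3 : 0 < Real.cosh ((π - α) / 2) := Real.cosh_pos _
    rw [div_eq_div_iff (ne_of_gt hc3) hy21, hsh2, hch2]
    field_simp
  -- the key algebraic identity
  have hP : 4 * (a - 1) * ((a - E) * Real.exp (π - α) + (a * E - 1) * Real.exp α)
          - (a - 1) ^ 2 * (Real.exp (2 * π - 2 * α) + Real.exp (2 * α))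
          - 2 * E * (-4 * a + (3 - 2 * a + 3 * a ^ 2) * Real.cosh π)
      = 4 * E * ((Real.sinh π * (α + ((1 + K ^ 2) * Real.cosh (π - α) - 2 * K) /
              Real.sinh (π - α)) - ((1 + K ^ 2) * Real.cosh π - 2 * K))
            + a ^ 2 * Real.sinh π *
              (π - (α + 2 * (Real.sinh ((π - α) / 2) / Real.cosh ((π - α) / 2)))))
        - 2 * (E ^ 2 - 1) * (α + a ^ 2 * (π - α)) := by
    rw [hq1, hq2, hK, hch, hsh, hchpa, hEa, hea, h2pa, h2a]
    field_simp
    ring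
  have hF0 : 0 < π * (4 * E * ((Real.sinh π * (α + ((1 + K ^ 2) * Real.cosh (π - α) - 2 * K) /
          Real.sinh (π - α)) - ((1 + K ^ 2) * Real.cosh π - 2 * K))
        + a ^ 2 * Real.sinh π *
          (π - (α + 2 * (Real.sinh ((π - α) / 2) / Real.cosh ((π - α) / 2)))))
      - 2 * (E ^ 2 - 1) * (α + a ^ 2 * (π - α)))
      + 8 * (E ^ 2 - 1) * (α + a ^ 2 * (π - α)) := by
    have h1 : (0:ℝ) ≤ π * (4 * E) := by positivity
    linarith [mul_nonneg h1 hM, mul_pos (mul_pos h8 hE2) hT]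
  have hF1 : 0 < 8 * (E ^ 2 - 1) *
      (2 * a ^ 2 * π + (1 - a ^ 2) * (2 * α - Real.sin (2 * α))) := by
    have i1 : 0 < 2 * a ^ 2 * π := by positivity
    have i2 : 0 ≤ (1 - a ^ 2) * (2 * α - Real.sin (2 * α)) :=
      mul_nonneg (by linarith) (by linarith)
    have i3 : (0:ℝ) < 8 * (E ^ 2 - 1) := by linarith
    exact mul_pos i3 (by linarith)
  have hcos2 : Real.cos (2 * γ) = 1 - 2 * Real.sin γ ^ 2 := by
    rw [Real.cos_two_mul, Real.cos_sq']; ring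
  rw [hcos2, Real.cos_sq', he2p, hP]
  clear hP hq1 hq2 L1 L1' L2 hM hEa hea h2pa h2a he2p hch hsh hchpa hshpa hsh2 hch2 hcos2
  have hg0 : 0 ≤ Real.sin γ ^ 2 := sq_nonneg _
  have hg1 : Real.sin γ ^ 2 ≤ 1 := Real.sin_sq_le_one γ
  rcases le_or_gt (Real.sin γ ^ 2) (1/2) with hc | hc
  · linarith [mul_pos (by linarith : (0:ℝ) < 1 - Real.sin γ ^ 2) hF0,
      mul_nonneg hg0 hF1.le]
  · linarith [mul_nonneg (sub_nonneg.mpr hg1) hF0.le,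
      mul_pos (by linarith : (0:ℝ) < Real.sin γ ^ 2) hF1]

/-- **Remark 1.4.** `A[α,γ,a] > 0`, and the quadratic attains its minimum over `(0,∞)` at the
unique point `x̄ = π |a| Θ₀^low / (4 A[α,γ,a]) > 0`. -/
theorem Aconst_pos_and_min (a α γ : ℝ) (ha : a ∈ Ico (-1 : ℝ) 1) (ha0 : a ≠ 0)
    (hα : α ∈ Ioo 0 π) (hγ : γ ∈ Icc 0 (π / 2)) :
    0 < Aconst α γ a ∧ 0 < xbar α γ a ∧
    (∀ x ∈ Ioi (0 : ℝ), Pq α γ a (xbar α γ a) ≤ Pq α γ a x) ∧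
    (∀ x ∈ Ioi (0 : ℝ), (∀ y ∈ Ioi (0 : ℝ), Pq α γ a x ≤ Pq α γ a y) → x = xbar α γ a) := by
  obtain ⟨hα0, hαπ⟩ := hα
  have hπ := Real.pi_pos
  have hsπ : 0 < Real.sinh π := Real.sinh_pos_iff.mpr hπ
  have hbr := bracket_pos a α γ ha.1 ha.2 ha0 hα0 hαπ
  have hfac : 0 < -1 + Real.cosh π / Real.sinh π := by
    have h := Real.cosh_sub_sinh π
    have h2 : Real.sinh π < Real.cosh π := by nlinarith [Real.exp_pos (-π)]
    have h3 : 1 < Real.cosh π / Real.sinh π := (one_lt_div hsπ).mpr h2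
    linarith
  have hA : 0 < Aconst α γ a := by
    unfold Aconst
    exact mul_pos (mul_pos (by norm_num) hfac) hbr
  have hθ : 0 < ThetaLow := by unfold ThetaLow; norm_num
  have hxb : 0 < xbar α γ a := by
    unfold xbar
    exact div_pos (mul_pos (mul_pos hπ (abs_pos.mpr ha0)) hθ) (by linarith)
  have hAne : Aconst α γ a ≠ 0 := ne_of_gt hA
  have key : ∀ x : ℝ, Pq α γ a x - Pq α γ a (xbar α γ a)
      = Aconst α γ a * (x - xbar α γ a) ^ 2 := by
    intro x
    simp only [Pq, xbar]
    field_simp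
    ring
  refine ⟨hA, hxb, fun x _ => ?_, fun x hx hxmin => ?_⟩
  · nlinarith [key x, mul_nonneg hA.le (sq_nonneg (x - xbar α γ a))]
  · have h1 := hxmin (xbar α γ a) (Set.mem_Ioi.mpr hxb)
    have h2 : (x - xbar α γ a) ^ 2 ≤ 0 := by nlinarith [key x]
    have h3 : (x - xbar α γ a) ^ 2 = 0 := le_antisymm h2 (sq_nonneg _)
    have h4 : x - xbar α γ a = 0 := by
      exact pow_eq_zero_iff (by norm_num) |>.mp h3
    linarith


end MagStep
end
end
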